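/- arXiv:0802.0814 — 4 statements merged into one kernel-verified Lean document; each statement's English description precedes it below -/
import Mathlib

section
/- Let F be a field of characteristic zero, V a finite-dimensional F-vector space, and N a nilpotent endomorphism of V. If (W_k)_{k ∈ ℤ} and (W'_k)_{k ∈ ℤ} are both weight filtrations for N, then W_k = W'_k for every k ∈ ℤ. -/
/-- `W` is a weight filtration for the nilpotent endomorphism `N` of `V`:
an increasing filtration, exhaustive and separated, with `N (W k) ⊆ W (k-2)`,
and such that for every natural number `k`, `N^k` maps `W k` into `W (-k)` and
the induced map `W k / W (k-1) → W (-k) / W (-k-1)` is an isomorphism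
(expressed via injectivity and surjectivity of the induced map). -/
def IsWeightFiltration (F : Type*) [Field F] {V : Type*} [AddCommGroup V] [Module F V]
    (N : V →ₗ[F] V) (W : ℤ → Submodule F V) : Prop :=
  (∀ k : ℤ, W k ≤ W (k + 1)) ∧
  (∃ a : ℤ, ∀ k : ℤ, k ≤ a → W k = ⊥) ∧
  (∃ b : ℤ, ∀ k : ℤ, b ≤ k → W k = ⊤) ∧
  (∀ k : ℤ, ∀ x : V, x ∈ W k → N x ∈ W (k - 2)) ∧
  (∀ j : ℕ,
    (∀ x : V, x ∈ W (j : ℤ) → (N ^ j) x ∈ W (-(j : ℤ))) ∧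
    (∀ x : V, x ∈ W (j : ℤ) → (N ^ j) x ∈ W (-(j : ℤ) - 1) → x ∈ W ((j : ℤ) - 1)) ∧
    (∀ y : V, y ∈ W (-(j : ℤ)) → ∃ x ∈ W (j : ℤ), y - (N ^ j) x ∈ W (-(j : ℤ) - 1)))

section Aux

variable {F : Type*} [Field F] {V : Type*} [AddCommGroup V] [Module F V]
  {N : V →ₗ[F] V} {W W' : ℤ → Submodule F V}

lemma wf_mono (hW : IsWeightFiltration F N W) : Monotone W := by
  intro i j hij
  exact Int.le_induction (motive := fun j _ => W i ≤ W j) le_rfl (fun n _ ih => ih.trans (hW.1 n)) j hij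

lemma wf_npow (hW : IsWeightFiltration F N W) (i : ℕ) (k : ℤ) (x : V)
    (hx : x ∈ W k) : (N ^ i) x ∈ W (k - 2 * i) := by
  induction i generalizing k x with
  | zero => simpa using hx
  | succ n ih =>
    have h1 : N x ∈ W (k - 2) := hW.2.2.2.1 k x hx
    have h2 := ih (k - 2) (N x) h1
    have heq : (N ^ (n + 1)) x = (N ^ n) (N x) := by
      rw [pow_succ, Module.End.mul_apply]
    rw [heq]
    have : k - 2 - 2 * (n : ℤ) = k - 2 * ((n : ℕ) + 1 : ℕ) := by push_cast; ring
    rwa [this] at h2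

lemma wf_inj (hW : IsWeightFiltration F N W) (w j : ℕ) (hjw : j ≤ w) (x : V)
    (hx : x ∈ W (w : ℤ)) (hNx : (N ^ j) x ∈ W ((w : ℤ) - 2 * j - 1)) :
    x ∈ W ((w : ℤ) - 1) := by
  apply (hW.2.2.2.2 w).2.1 x hx
  have h2 := wf_npow hW (w - j) _ _ hNx
  have heq : (N ^ w) x = (N ^ (w - j)) ((N ^ j) x) := by
    rw [← Module.End.mul_apply, ← pow_add, Nat.sub_add_cancel hjw]
  rw [heq]
  have hc : ((w : ℤ) - 2 * j - 1) - 2 * ((w - j : ℕ) : ℤ) = -(w : ℤ) - 1 := by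
    have : ((w - j : ℕ) : ℤ) = (w : ℤ) - j := by omega
    rw [this]; ring
  rwa [hc] at h2

/-- Preimage characterization: for `k ≥ 0`, `W k = (N^{k+1})⁻¹ (W (-k-2))`. -/
lemma wf_pre (hW : IsWeightFiltration F N W) (k : ℕ) (x : V)
    (hx : (N ^ (k + 1)) x ∈ W (-(k : ℤ) - 2)) : x ∈ W (k : ℤ) := by
  obtain ⟨b, hb⟩ := hW.2.2.1
  have main : ∀ d : ℕ, x ∈ W ((k : ℤ) + d) → x ∈ W (k : ℤ) := by
    intro d
    induction d with
    | zero => simp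
    | succ n ih =>
      intro hxn
      apply ih
      have hx1 : x ∈ W ((k + n + 1 : ℕ) : ℤ) := by
        have : ((k + n + 1 : ℕ) : ℤ) = (k : ℤ) + (n + 1 : ℕ) := by push_cast; ring
        rwa [this]
      have hx2 : (N ^ (k + 1)) x ∈ W (((k + n + 1 : ℕ) : ℤ) - 2 * (k + 1 : ℕ) - 1) := by
        apply wf_mono hW _ hx
        push_cast; omega
      have h := wf_inj hW (k + n + 1) (k + 1) (by omega) x hx1 hx2
      have heq : ((k + n + 1 : ℕ) : ℤ) - 1 = (k : ℤ) + n := by push_cast; ring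
      rwa [heq] at h
  apply main (b - k).toNat
  rw [hb _ (by omega)]
  trivial

lemma wf_p1' (hW : IsWeightFiltration F N W) (hW' : IsWeightFiltration F N W')
    (k : ℕ) (h : W (-(k : ℤ) - 2) ≤ W' (-(k : ℤ) - 2)) : W (k : ℤ) ≤ W' (k : ℤ) := by
  intro x hx
  apply wf_pre hW' k x
  apply h
  have := wf_npow hW (k + 1) k x hx
  have heq : (k : ℤ) - 2 * ((k + 1 : ℕ) : ℤ) = -(k : ℤ) - 2 := by push_cast; ring
  rwa [heq] at this

lemma wf_p1 (hW : IsWeightFiltration F N W) (hW' : IsWeightFiltration F N W')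
    (k : ℕ) (h : W (-(k : ℤ) - 2) = W' (-(k : ℤ) - 2)) : W (k : ℤ) = W' (k : ℤ) :=
  le_antisymm (wf_p1' hW hW' k h.le) (wf_p1' hW' hW k h.ge)

lemma wf_p2' (hW : IsWeightFiltration F N W) (hW' : IsWeightFiltration F N W')
    (k : ℕ) (hpos : W (k : ℤ) ≤ W' (k : ℤ)) (hneg : W (-(k : ℤ) - 1) ≤ W' (-(k : ℤ) - 1)) :
    W (-(k : ℤ)) ≤ W' (-(k : ℤ)) := by
  intro x hx
  obtain ⟨y, hy, hxy⟩ := (hW.2.2.2.2 k).2.2 x hx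
  have h1 : (N ^ k) y ∈ W' (-(k : ℤ)) := (hW'.2.2.2.2 k).1 y (hpos hy)
  have h2 : x - (N ^ k) y ∈ W' (-(k : ℤ)) := wf_mono hW' (by omega) (hneg hxy)
  have h3 := Submodule.add_mem _ h2 h1
  simpa using h3

end Aux

/-- Uniqueness of the weight filtration of a nilpotent endomorphism. -/
theorem weightFiltration_unique (F : Type*) [Field F] [CharZero F]
    (V : Type*) [AddCommGroup V] [Module F V] [FiniteDimensional F V]
    (N : V →ₗ[F] V) (hN : IsNilpotent N)
    (W W' : ℤ → Submodule F V)
    (hW : IsWeightFiltration F N W) (hW' : IsWeightFiltration F N W') :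
    ∀ k : ℤ, W k = W' k := by
  obtain ⟨a, ha⟩ := hW.2.1
  obtain ⟨a', ha'⟩ := hW'.2.1
  set A : ℤ := min (min a a') 0 with hA
  have habot : ∀ j : ℤ, j ≤ A → W j = W' j := by
    intro j hj
    rw [ha j (by omega), ha' j (by omega)]
  have hneg : ∀ d : ℕ, ∀ j : ℤ, j ≤ A + d → j ≤ 0 → W j = W' j := by
    intro d
    induction d with
    | zero => intro j hj _; exact habot j (by omega)
    | succ n ih =>
      intro j hj hj0
      by_cases hc : j ≤ A + n
      · exact ih j hc hj0
      · set k : ℕ := (-j).toNat with hk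
        have hkj : (k : ℤ) = -j := by omega
        have h2 : W (-(k : ℤ) - 2) = W' (-(k : ℤ) - 2) := ih _ (by omega) (by omega)
        have hWk : W (k : ℤ) = W' (k : ℤ) := wf_p1 hW hW' k h2
        have h1 : W (-(k : ℤ) - 1) = W' (-(k : ℤ) - 1) := ih _ (by omega) (by omega)
        have hfin : W (-(k : ℤ)) = W' (-(k : ℤ)) :=
          le_antisymm (wf_p2' hW hW' k hWk.le h1.le) (wf_p2' hW' hW k hWk.ge h1.ge)
        rw [show j = -(k : ℤ) by omega]
        exact hfin
  intro k
  by_cases hk0 : k ≤ 0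
  · exact hneg (k - A).toNat k (by omega) hk0
  · have hk' : k = ((k.toNat : ℕ) : ℤ) := by omega
    rw [hk']
    apply wf_p1 hW hW'
    exact hneg (-(k.toNat : ℤ) - 2 - A).toNat _ (by omega) (by omega)
end

section
/- Let F be a field of characteristic zero, V a finite-dimensional F-vector space, N a nilpotent endomorphism of V, and m ≥ 1 an integer with N^{m+1} = 0. If (W_k)_{k ∈ ℤ} is a weight filtration for N, then W_k = V and W_{-k-1} = 0 for all k ≥ m, and moreover W_{m-1} = ker(N^m) and W_{-m} = im(N^m). -/
/-- If `N^(m+1) = 0` with `m ≥ 1` and `W` is a weight filtration for `N`, then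
`W k = V` and `W (-k-1) = 0` for all `k ≥ m`, `W (m-1) = ker (N^m)` and
`W (-m) = im (N^m)`. -/
theorem weightFiltration_of_pow_eq_zero (F : Type*) [Field F] [CharZero F]
    (V : Type*) [AddCommGroup V] [Module F V] [FiniteDimensional F V]
    (N : V →ₗ[F] V) (m : ℕ) (hm : 1 ≤ m) (hN : N ^ (m + 1) = 0)
    (W : ℤ → Submodule F V) (hW : IsWeightFiltration F N W) :
    (∀ k : ℤ, (m : ℤ) ≤ k → W k = ⊤ ∧ W (-k - 1) = ⊥) ∧
    W ((m : ℤ) - 1) = LinearMap.ker (N ^ m) ∧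
    W (-(m : ℤ)) = LinearMap.range (N ^ m) := by
  obtain ⟨h1, ⟨a, ha⟩, ⟨b, hb⟩, h4, h5⟩ := hW
  -- monotonicity
  have mono : ∀ i j : ℤ, i ≤ j → W i ≤ W j := by
    have key : ∀ i : ℤ, ∀ n : ℕ, W i ≤ W (i + n) := by
      intro i n
      induction n with
      | zero => simp
      | succ n ih =>
        refine ih.trans ?_
        have heq : i + (n : ℤ) + 1 = i + ((n : ℕ) + 1 : ℕ) := by push_cast; ring
        exact heq ▸ h1 (i + n)
    intro i j hij
    obtain ⟨n, rfl⟩ : ∃ n : ℕ, j = i + n := ⟨(j - i).toNat, by omega⟩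
    exact key i n
  -- N^j = 0 for j ≥ m+1
  have hNj : ∀ j : ℕ, m + 1 ≤ j → (N ^ j : V →ₗ[F] V) = 0 := by
    intro j hj
    obtain ⟨d, rfl⟩ := Nat.exists_eq_add_of_le hj
    rw [pow_add, hN, zero_mul]
  -- iterated action
  have iter : ∀ n : ℕ, ∀ k : ℤ, ∀ x ∈ W k, (N ^ n) x ∈ W (k - 2 * n) := by
    intro n
    induction n with
    | zero => intro k x hx; simpa using hx
    | succ n ih =>
      intro k x hx
      have h := h4 _ _ (ih k x hx)
      have heq : (k - 2 * (n : ℤ)) - 2 = k - 2 * ((n : ℕ) + 1 : ℕ) := by push_cast; ring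
      rw [heq] at h
      rw [pow_succ']
      exact h
  -- W m = ⊤
  have stepTop : ∀ n : ℕ, W ((m : ℤ) + n) ≤ W (m : ℤ) := by
    intro n
    induction n with
    | zero => simp
    | succ n ih =>
      intro x hx
      set j : ℕ := m + n + 1 with hjdef
      have hx' : x ∈ W (j : ℤ) := by
        have : (m : ℤ) + ((n : ℕ) + 1 : ℕ) = (j : ℤ) := by push_cast [hjdef]; ring
        rwa [this] at hx
      have hz : (N ^ j) x ∈ W (-(j : ℤ) - 1) := by
        rw [hNj j (by omega)]
        exact (W (-(j : ℤ) - 1)).zero_mem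
      have := (h5 j).2.1 x hx' hz
      have hcast : (j : ℤ) - 1 = (m : ℤ) + (n : ℕ) := by push_cast [hjdef]; ring
      rw [hcast] at this
      exact ih this
  have Wmtop : W (m : ℤ) = ⊤ := by
    set n : ℕ := (b - m).toNat with hn
    have hble : b ≤ (m : ℤ) + n := by omega
    have := hb ((m : ℤ) + n) hble
    exact eq_top_iff.mpr (this ▸ stepTop n)
  -- W (-m-1) = ⊥
  have stepBot : ∀ n : ℕ, W (-(m : ℤ) - 1) ≤ W (-(m : ℤ) - 1 - n) := by
    intro n
    induction n with
    | zero => simp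
    | succ n ih =>
      refine ih.trans ?_
      intro y hy
      set j : ℕ := m + 1 + n with hjdef
      have hy' : y ∈ W (-(j : ℤ)) := by
        have : -(m : ℤ) - 1 - (n : ℕ) = -(j : ℤ) := by push_cast [hjdef]; ring
        rwa [this] at hy
      obtain ⟨x, _, hmem⟩ := (h5 j).2.2 y hy'
      rw [hNj j (by omega)] at hmem
      simp only [LinearMap.zero_apply, sub_zero] at hmem
      have : -(j : ℤ) - 1 = -(m : ℤ) - 1 - ((n : ℕ) + 1 : ℕ) := by push_cast [hjdef]; ring
      rwa [this] at hmem
  have Wbot : W (-(m : ℤ) - 1) = ⊥ := by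
    set n : ℕ := (-(m : ℤ) - 1 - a).toNat with hn
    have hle : -(m : ℤ) - 1 - n ≤ a := by omega
    have := ha _ hle
    exact eq_bot_iff.mpr (this ▸ stepBot n)
  refine ⟨?_, ?_, ?_⟩
  · intro k hk
    constructor
    · exact eq_top_iff.mpr (Wmtop ▸ mono (m : ℤ) k hk)
    · refine eq_bot_iff.mpr (Wbot ▸ mono (-k - 1) (-(m : ℤ) - 1) (by omega))
  · apply le_antisymm
    · intro x hx
      have := iter m ((m : ℤ) - 1) x hx
      have heq : (m : ℤ) - 1 - 2 * m = -(m : ℤ) - 1 := by ring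
      rw [heq, Wbot] at this
      simpa [LinearMap.mem_ker] using this
    · intro x hx
      have hxm : x ∈ W (m : ℤ) := by rw [Wmtop]; trivial
      refine (h5 m).2.1 x hxm ?_
      rw [LinearMap.mem_ker] at hx
      rw [hx]
      exact (W (-(m : ℤ) - 1)).zero_mem
  · apply le_antisymm
    · intro y hy
      obtain ⟨x, hx, hmem⟩ := (h5 m).2.2 y hy
      rw [Wbot] at hmem
      have : y = (N ^ m) x := sub_eq_zero.mp ((Submodule.mem_bot F).mp hmem)
      exact ⟨x, this.symm⟩
    · rintro y ⟨x, rfl⟩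
      exact (h5 m).1 x (by rw [Wmtop]; trivial)
end

section
/- Let F be a field of characteristic zero, V a finite-dimensional F-vector space equipped with a filtration (W_k)_{k ∈ ℤ}, and N a nilpotent endomorphism of V preserving the filtration (N(W_m) ⊆ W_m for all m). If (M_k)_{k ∈ ℤ} and (M'_k)_{k ∈ ℤ} are both relative weight filtrations for N relative to W_•, then M_k = M'_k for every k ∈ ℤ. -/
/-- `W` is a (finite, exhaustive, separated, increasing) filtration of `V`. -/
def IsVSFiltration (F : Type*) [Field F] {V : Type*} [AddCommGroup V] [Module F V]
    (W : ℤ → Submodule F V) : Prop :=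
  (∀ k : ℤ, W k ≤ W (k + 1)) ∧
  (∃ a : ℤ, ∀ k : ℤ, k ≤ a → W k = ⊥) ∧
  (∃ b : ℤ, ∀ k : ℤ, b ≤ k → W k = ⊤)

/-- `J` is a weight filtration for the endomorphism induced by `N` on the
subquotient `T / B` of `V` (here `B ≤ T` are `N`-stable submodules of `V`, the
terms of `J` all satisfy `B ≤ J k ≤ T`, and all conditions on the subquotient are
expressed at the level of representatives in `V`): `J` is increasing, equal to `B`
for small indices and `T` for large indices, the induced endomorphism maps the
`k`-th term to the `(k-2)`-nd, and for each natural number `j`, the `j`-th power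
of the induced endomorphism maps the `j`-th term into the `(-j)`-th term and
induces an isomorphism `J j / J (j-1) → J (-j) / J (-j-1)`. -/
def IsGrWeightFiltration (F : Type*) [Field F] {V : Type*} [AddCommGroup V] [Module F V]
    (N : V →ₗ[F] V) (B T : Submodule F V) (J : ℤ → Submodule F V) : Prop :=
  (∀ k : ℤ, J k ≤ J (k + 1)) ∧
  (∃ a : ℤ, ∀ k : ℤ, k ≤ a → J k = B) ∧
  (∃ b : ℤ, ∀ k : ℤ, b ≤ k → J k = T) ∧
  (∀ k : ℤ, ∀ x : V, x ∈ J k → N x ∈ J (k - 2)) ∧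
  (∀ j : ℕ,
    (∀ x : V, x ∈ J (j : ℤ) → (N ^ j) x ∈ J (-(j : ℤ))) ∧
    (∀ x : V, x ∈ J (j : ℤ) → (N ^ j) x ∈ J (-(j : ℤ) - 1) → x ∈ J ((j : ℤ) - 1)) ∧
    (∀ y : V, y ∈ J (-(j : ℤ)) → ∃ x ∈ J (j : ℤ), y - (N ^ j) x ∈ J (-(j : ℤ) - 1)))

/-- `M` is a relative weight filtration for the nilpotent endomorphism `N` of the
filtered vector space `(V, W)`: `M` is a filtration of `V` with `N (M k) ⊆ M (k-2)`,
and for each `m` the filtration induced by `M` on `Gr^W_m V = W m / W (m-1)`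
(whose `k`-th term is the image of `M k ⊓ W m`, represented at the level of `V` by
`(M k ⊓ W m) ⊔ W (m-1)`), shifted so that its `k`-th term is the original `(k+m)`-th
term, is the weight filtration of the endomorphism `N_m` induced by `N` on
`Gr^W_m V`. -/
def IsRelativeWeightFiltration (F : Type*) [Field F] {V : Type*} [AddCommGroup V] [Module F V]
    (N : V →ₗ[F] V) (W M : ℤ → Submodule F V) : Prop :=
  IsVSFiltration F M ∧
  (∀ k : ℤ, ∀ x : V, x ∈ M k → N x ∈ M (k - 2)) ∧
  (∀ m : ℤ, IsGrWeightFiltration F N (W (m - 1)) (W m)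
    (fun k => (M (k + m) ⊓ W m) ⊔ W (m - 1)))

namespace RWFU


variable {F : Type*} [Field F] {V : Type*} [AddCommGroup V] [Module F V]

/-- monotonicity from one-step monotonicity -/
lemma zmono {J : ℤ → Submodule F V} (h : ∀ k, J k ≤ J (k + 1)) :
    ∀ {c d : ℤ}, c ≤ d → J c ≤ J d := by
  intro c d hcd
  have key : ∀ t : ℕ, J c ≤ J (c + t) := by
    intro t
    induction t with
    | zero => simp
    | succ t ih =>
      refine ih.trans ?_
      have := h (c + t)
      have he : (c : ℤ) + t + 1 = c + (t + 1 : ℕ) := by push_cast; ring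
      rwa [he] at this
  have := key (d - c).toNat
  rwa [show c + ((d - c).toNat : ℤ) = d by omega] at this

/-- iterated shift by -2 -/
lemma zshift {N : V →ₗ[F] V} {J : ℤ → Submodule F V}
    (h : ∀ k : ℤ, ∀ x : V, x ∈ J k → N x ∈ J (k - 2)) :
    ∀ (t : ℕ) (k : ℤ) (x : V), x ∈ J k → (N ^ t) x ∈ J (k - 2 * t) := by
  intro t
  induction t with
  | zero => intro k x hx; simpa using hx
  | succ t ih =>
    intro k x hx
    have h1 : (N ^ (t + 1)) x = N ((N ^ t) x) := by
      rw [pow_succ']; rfl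
    rw [h1]
    have h2 := h _ _ (ih k x hx)
    rwa [show k - 2 * (t : ℤ) - 2 = k - 2 * ((t : ℕ) + 1 : ℕ) by push_cast; ring] at h2

/-- iterated stability -/
lemma zstab {N : V →ₗ[F] V} {U : Submodule F V} (h : ∀ x ∈ U, N x ∈ U) :
    ∀ (t : ℕ) (x : V), x ∈ U → (N ^ t) x ∈ U := by
  intro t
  induction t with
  | zero => intro x hx; simpa using hx
  | succ t ih =>
    intro x hx
    have h1 : (N ^ (t + 1)) x = N ((N ^ t) x) := by rw [pow_succ']; rfl
    rw [h1]; exact h _ (ih x hx)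

section Zipper

variable {N : V →ₗ[F] V} {B T : Submodule F V}

/-- the descending zipper identity -/
lemma zipA {J : ℤ → Submodule F V} (hJ : IsGrWeightFiltration F N B T J) (j : ℕ) :
    J ((j : ℤ) - 1) = J (j : ℤ) ⊓ Submodule.comap (N ^ j) (J (-(j : ℤ) - 1)) := by
  obtain ⟨hm, -, -, hs, hc⟩ := hJ
  ext x
  constructor
  · intro hx
    refine ⟨zmono hm (by omega) hx, ?_⟩
    have := zshift hs j _ x hx
    simpa [Submodule.mem_comap, show (j : ℤ) - 1 - 2 * (j : ℤ) = -(j : ℤ) - 1 by ring] using this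
  · rintro ⟨h1, h2⟩
    exact (hc j).2.1 x h1 h2

/-- the ascending zipper identity -/
lemma zipB {J : ℤ → Submodule F V} (hJ : IsGrWeightFiltration F N B T J) (j : ℕ) :
    J (-(j : ℤ)) = Submodule.map (N ^ j) (J (j : ℤ)) ⊔ J (-(j : ℤ) - 1) := by
  obtain ⟨hm, -, -, hs, hc⟩ := hJ
  ext y
  constructor
  · intro hy
    obtain ⟨x, hx, hx2⟩ := (hc j).2.2 y hy
    have : y = (N ^ j) x + (y - (N ^ j) x) := by abel
    rw [this]
    exact Submodule.add_mem _ (Submodule.mem_sup_left ⟨x, hx, rfl⟩)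
      (Submodule.mem_sup_right hx2)
  · intro hy
    rcases Submodule.mem_sup.mp hy with ⟨u, hu, v, hv, rfl⟩
    refine Submodule.add_mem _ ?_ (zmono hm (by omega) hv)
    rcases hu with ⟨x, hx, rfl⟩
    exact (hc j).1 x hx

/-- Uniqueness of the graded weight filtration (the "zipper"). -/
lemma gr_unique {J J' : ℤ → Submodule F V}
    (hJ : IsGrWeightFiltration F N B T J) (hJ' : IsGrWeightFiltration F N B T J') :
    ∀ k, J k = J' k := by
  obtain ⟨hm1, ⟨a1, ha1⟩, ⟨b1, hb1⟩, hs1, hc1⟩ := id hJ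
  obtain ⟨hm2, ⟨a2, ha2⟩, ⟨b2, hb2⟩, hs2, hc2⟩ := id hJ'
  set n : ℤ := max (max b1 b2) (max (-a1 - 1) (max (-a2 - 1) 0)) with hn
  have hT : ∀ k : ℤ, n ≤ k → J k = T ∧ J' k = T := fun k hk =>
    ⟨hb1 k (by omega), hb2 k (by omega)⟩
  have hB : ∀ k : ℤ, k ≤ -n - 1 → J k = B ∧ J' k = B := fun k hk =>
    ⟨ha1 k (by omega), ha2 k (by omega)⟩
  have key : ∀ t : ℕ, J (n - t) = J' (n - t) ∧ J ((t : ℤ) - n - 1) = J' ((t : ℤ) - n - 1) := by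
    intro t
    induction t using Nat.strong_induction_on with
    | _ t ih =>
      rcases Nat.eq_zero_or_pos t with rfl | htpos
      · constructor
        · simp only [Nat.cast_zero, sub_zero]
          exact (hT n le_rfl).1.trans (hT n le_rfl).2.symm
        · have h1 := hB ((0 : ℤ) - n - 1) (by omega)
          simpa using h1.1.trans h1.2.symm
      · obtain ⟨t', rfl⟩ : ∃ t', t = t' + 1 := ⟨t - 1, by omega⟩
        have hprev := ih t' (by omega)
        by_cases hj : 1 ≤ n - t'
        · set j : ℕ := (n - t').toNat with hjdef
          have hjc : (j : ℤ) = n - t' := Int.toNat_of_nonneg (by omega)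
          have e1 : ((t' + 1 : ℕ) : ℤ) - n - 1 = -(j : ℤ) := by push_cast; omega
          have e2 : n - ((t' + 1 : ℕ) : ℤ) = (j : ℤ) - 1 := by push_cast; omega
          have e3 : ((t' : ℕ) : ℤ) - n - 1 = -(j : ℤ) - 1 := by push_cast; omega
          have hJj : J (j : ℤ) = J' (j : ℤ) := by rw [hjc]; exact hprev.1
          have hJmj : J (-(j : ℤ) - 1) = J' (-(j : ℤ) - 1) := by
            rw [show -(j : ℤ) - 1 = ((t' : ℕ) : ℤ) - n - 1 by omega]; exact hprev.2
          constructor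
          · rw [e2, zipA hJ j, zipA hJ' j, hJj, hJmj]
          · rw [e1, zipB hJ j, zipB hJ' j, hJj, hJmj]
        · -- n - t' ≤ 0
          push_neg at hj
          by_cases ht'' : 0 ≤ n + (n - t' - 1)
          · -- indices already covered at step t'' = n + (n - t') - 1? use t'' := (n + n - t').toNat
            set t'' : ℕ := (n + n - t').toNat with ht''def
            have ht''c : (t'' : ℤ) = n + n - t' := Int.toNat_of_nonneg (by omega)
            have ht''lt : t'' < t' + 1 := by omega
            have h2 := ih t'' ht''lt
            constructor
            · rw [show n - ((t' + 1 : ℕ) : ℤ) = ((t'' : ℕ) : ℤ) - n - 1 by push_cast; omega]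
              exact h2.2
            · rw [show ((t' + 1 : ℕ) : ℤ) - n - 1 = n - ((t'' : ℕ) : ℤ) by push_cast; omega]
              exact h2.1
          · -- deep zones
            constructor
            · have h1 := hB (n - ((t' + 1 : ℕ) : ℤ)) (by push_cast; omega)
              exact h1.1.trans h1.2.symm
            · have h1 := hT (((t' + 1 : ℕ) : ℤ) - n - 1) (by push_cast; omega)
              exact h1.1.trans h1.2.symm
  intro k
  by_cases hk : k ≤ n
  · have := (key (n - k).toNat).1
    rwa [show n - ((n - k).toNat : ℤ) = k by omega] at this
  · exact ((hT k (by omega)).1).trans ((hT k (by omega)).2).symm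

end Zipper



/-- a linear choice: if `D ≤ E ⊔ A` there is a linear `φ : D → V` with values in `A`
such that `d - φ d ∈ E`. -/
lemma exists_linear_choice (D E A : Submodule F V) (h : D ≤ E ⊔ A) :
    ∃ φ : ↥D →ₗ[F] V, (∀ d : ↥D, φ d ∈ A) ∧ (∀ d : ↥D, (d : V) - φ d ∈ E) := by
  set θ : (↥E × ↥A) →ₗ[F] V := E.subtype.coprod A.subtype with hθ
  have hrange : LinearMap.range θ = E ⊔ A := by
    rw [hθ, LinearMap.range_coprod, Submodule.range_subtype, Submodule.range_subtype]
  obtain ⟨σ, hσ⟩ := θ.rangeRestrict.exists_rightInverse_of_surjective θ.range_rangeRestrict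
  have hincl : D ≤ LinearMap.range θ := by rw [hrange]; exact h
  set ι : ↥D →ₗ[F] ↥(LinearMap.range θ) := Submodule.inclusion hincl with hι
  refine ⟨A.subtype.comp ((LinearMap.snd F ↥E ↥A).comp (σ.comp ι)), fun d => ?_, fun d => ?_⟩
  · exact (σ (ι d)).2.2
  · have h1 : θ (σ (ι d)) = (d : V) := by
      have := congrArg (fun g => g (ι d)) hσ
      simp only [LinearMap.comp_apply, LinearMap.id_apply] at this
      have h2 : (θ.rangeRestrict (σ (ι d)) : V) = ((ι d : ↥(LinearMap.range θ)) : V) :=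
        congrArg _ this
      simpa [hι] using h2
    have h2 : θ (σ (ι d)) = ((σ (ι d)).1 : V) + ((σ (ι d)).2 : V) := rfl
    have h3 : (d : V) - ((σ (ι d)).2 : V) = ((σ (ι d)).1 : V) := by
      rw [← h1, h2]; abel
    simp only [LinearMap.comp_apply, Submodule.coe_subtype, LinearMap.snd_apply]
    rw [h3]; exact (σ (ι d)).1.2

/-- complement of a submodule inside another submodule -/
lemma exists_compl_le {p q : Submodule F V} (hpq : p ≤ q) :
    ∃ E : Submodule F V, E ≤ q ∧ E ⊓ p = ⊥ ∧ p ⊔ E = q := by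
  obtain ⟨r, hr⟩ := Submodule.exists_isCompl (Submodule.comap q.subtype p)
  refine ⟨r.map q.subtype, Submodule.map_subtype_le q r, ?_, ?_⟩
  · have h1 : (Submodule.map q.subtype r) ⊓ p = Submodule.map q.subtype (r ⊓ Submodule.comap q.subtype p) := by
      rw [Submodule.map_inf _ (Submodule.injective_subtype q), Submodule.map_comap_subtype]
      rw [inf_eq_right.mpr hpq]
    rw [h1, hr.symm.inf_eq_bot, Submodule.map_bot]
  · have h2 : p ⊔ Submodule.map q.subtype r
        = Submodule.map q.subtype (Submodule.comap q.subtype p ⊔ r) := by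
      rw [Submodule.map_sup, Submodule.map_comap_subtype, inf_eq_right.mpr hpq]
    rw [h2, hr.sup_eq_top, Submodule.map_top, Submodule.range_subtype]

/-- Existence of a corrector map `f`. -/
lemma exists_corrector (U A : Submodule F V) (X Y : ℕ → Submodule F V)
    (hX0 : X 0 ≤ U)
    (hXmono : ∀ t, X t ≤ X (t + 1))
    (hYmono : ∀ t, Y t ≤ Y (t + 1))
    (hXU : ∀ t, X t ⊓ U ≤ Y t)
    (hXA : ∀ t, X t ≤ Y t ⊔ A) :
    ∀ T : ℕ, ∃ f : V →ₗ[F] V, (∀ v, f v ∈ A) ∧ (∀ u ∈ U, f u = 0) ∧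
      (∀ t, t ≤ T → ∀ x ∈ X t, x - f x ∈ Y t) := by
  intro T
  induction T with
  | zero =>
    refine ⟨0, by simp, by simp, ?_⟩
    intro t ht x hx
    interval_cases t
    simpa using hXU 0 ⟨hx, hX0 hx⟩
  | succ T ihT =>
    obtain ⟨f₀, hf₀A, hf₀U, hf₀⟩ := ihT
    set VT : Submodule F V := U ⊔ X T with hVT
    set W₀ : Submodule F V := VT ⊓ X (T + 1) with hW₀
    obtain ⟨E, hE1, hE2, hE3⟩ := exists_compl_le (inf_le_right : W₀ ≤ X (T + 1))
    obtain ⟨D, hD⟩ := Submodule.exists_isCompl (VT ⊔ E)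
    -- E ⊓ VT = ⊥
    have hEVT : E ⊓ VT = ⊥ := by
      have : E ⊓ VT = E ⊓ W₀ := by
        rw [hW₀]
        rw [inf_comm VT (X (T+1)), ← inf_assoc]
        congr 1
        exact (inf_eq_left.mpr hE1).symm
      rw [this, hE2]
    -- IsCompl VT (E ⊔ D)
    have hc1 : IsCompl VT (E ⊔ D) := by
      constructor
      · rw [disjoint_iff]
        ext v; simp only [Submodule.mem_inf, Submodule.mem_bot]
        constructor
        · rintro ⟨hv1, hv2⟩
          rcases Submodule.mem_sup.mp hv2 with ⟨e, he, d, hd, rfl⟩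
          have hdmem : d ∈ (VT ⊔ E) ⊓ D := by
            refine ⟨?_, hd⟩
            have : d = (e + d) - e := by abel
            rw [this]
            exact Submodule.sub_mem _ (Submodule.mem_sup_left hv1) (Submodule.mem_sup_right he)
          rw [hD.inf_eq_bot] at hdmem
          simp only [Submodule.mem_bot] at hdmem
          subst hdmem
          have hemem : e ∈ E ⊓ VT := ⟨he, by simpa using hv1⟩
          rw [hEVT] at hemem
          simp only [Submodule.mem_bot] at hemem
          simp [hemem]
        · rintro rfl; exact ⟨Submodule.zero_mem _, Submodule.zero_mem _⟩
      · rw [codisjoint_iff, ← sup_assoc, hD.sup_eq_top]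
    have hc2 : IsCompl E (VT ⊔ D) := by
      constructor
      · rw [disjoint_iff]
        ext v; simp only [Submodule.mem_inf, Submodule.mem_bot]
        constructor
        · rintro ⟨hv1, hv2⟩
          rcases Submodule.mem_sup.mp hv2 with ⟨w, hw, d, hd, rfl⟩
          have hdmem : d ∈ (VT ⊔ E) ⊓ D := by
            refine ⟨?_, hd⟩
            have : d = (w + d) - w := by abel
            rw [this]
            exact Submodule.sub_mem _ (Submodule.mem_sup_right hv1) (Submodule.mem_sup_left hw)
          rw [hD.inf_eq_bot] at hdmem
          simp only [Submodule.mem_bot] at hdmem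
          subst hdmem
          have hemem : (w + 0) ∈ E ⊓ VT := ⟨by simpa using hv1, by simpa using hw⟩
          rw [hEVT] at hemem
          simpa using hemem
        · rintro rfl; exact ⟨Submodule.zero_mem _, Submodule.zero_mem _⟩
      · rw [codisjoint_iff, ← sup_assoc, sup_comm E VT]
        exact hD.sup_eq_top
    obtain ⟨φ, hφA, hφE⟩ := exists_linear_choice E (Y (T + 1)) A (hE1.trans (hXA (T + 1)))
    set πVT := VT.linearProjOfIsCompl (E ⊔ D) hc1 with hπVT
    set πE := E.linearProjOfIsCompl (VT ⊔ D) hc2 with hπE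
    set f : V →ₗ[F] V := f₀.comp (VT.subtype.comp πVT) + φ.comp πE with hf
    have hfVT : ∀ v ∈ VT, f v = f₀ v := by
      intro v hv
      have h1 : πVT v = ⟨v, hv⟩ := Submodule.linearProjOfIsCompl_apply_left hc1 ⟨v, hv⟩
      have h2 : πE v = 0 := Submodule.projectionOnto_apply_right hc2
        ⟨v, Submodule.mem_sup_left hv⟩
      simp [hf, h1, h2]
    have hfE : ∀ (e : V) (he : e ∈ E), f e = φ ⟨e, he⟩ := by
      intro e he
      have h1 : πVT e = 0 := Submodule.projectionOnto_apply_right hc1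
        ⟨e, Submodule.mem_sup_left he⟩
      have h2 : πE e = ⟨e, he⟩ := Submodule.linearProjOfIsCompl_apply_left hc2 ⟨e, he⟩
      simp [hf, h1, h2]
    refine ⟨f, ?_, ?_, ?_⟩
    · intro v
      simp only [hf, LinearMap.add_apply, LinearMap.comp_apply]
      exact Submodule.add_mem _ (hf₀A _) (hφA _)
    · intro u hu
      rw [hfVT u (Submodule.mem_sup_left hu)]
      exact hf₀U u hu
    · intro t ht x hx
      have hXmono' : ∀ {s u : ℕ}, s ≤ u → X s ≤ X u := by
        intro s u hsu
        exact monotone_nat_of_le_succ hXmono hsu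
      by_cases htT : t ≤ T
      · have hxVT : x ∈ VT := Submodule.mem_sup_right (hXmono' htT hx)
        rw [hfVT x hxVT]
        exact hf₀ t htT x hx
      · have ht1 : t = T + 1 := by omega
        subst ht1
        have hxmem : x ∈ W₀ ⊔ E := by rw [hE3]; exact hx
        rcases Submodule.mem_sup.mp hxmem with ⟨w, hw, e, he, rfl⟩
        have hwVT : w ∈ VT := hw.1
        have hmod : W₀ = X T ⊔ (U ⊓ X (T + 1)) := by
          rw [hW₀, hVT, sup_comm U (X T)]
          exact sup_inf_assoc_of_le U (hXmono T)
        rcases Submodule.mem_sup.mp (hmod ▸ hw) with ⟨xT, hxT, u', hu', rfl⟩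
        have hfw : f (xT + u') = f₀ xT := by
          rw [hfVT _ hwVT, map_add, hf₀U u' hu'.1, add_zero]
        have hfe : f e = φ ⟨e, he⟩ := hfE e he
        have hsplit : (xT + u' + e) - f (xT + u' + e)
            = ((xT - f₀ xT) + u') + (e - φ ⟨e, he⟩) := by
          rw [map_add, hfw, hfe]; abel
        rw [hsplit]
        refine Submodule.add_mem _ (Submodule.add_mem _ ?_ ?_) ?_
        · exact hYmono T (hf₀ T le_rfl xT hxT)
        · exact hXU (T + 1) ⟨hu'.2, hu'.1⟩
        · exact hφE ⟨e, he⟩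

/-- The key inclusion lemma. -/
lemma key_incl
    (N : V →ₗ[F] V)
    (M M' K : ℤ → Submodule F V) (U A : Submodule F V)
    (α β lo khi : ℤ)
    (hαβ : α < β)
    (hMN : ∀ k : ℤ, ∀ x ∈ M k, N x ∈ M (k - 2))
    (hM'N : ∀ k : ℤ, ∀ x ∈ M' k, N x ∈ M' (k - 2))
    (hKmono : ∀ {c d : ℤ}, c ≤ d → K c ≤ K d)
    (hKN : ∀ k : ℤ, ∀ x ∈ K k, N x ∈ K (k - 2))
    (hK2 : ∀ j : ℕ, ∀ y ∈ K (α + (j : ℤ)),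
      (N ^ j) y ∈ K (α - (j : ℤ) - 1) → y ∈ K (α + (j : ℤ) - 1))
    (hS3 : ∀ i : ℕ, ∀ y ∈ (M (β - (i : ℤ)) ⊔ U),
      ∃ h ∈ (M (β + (i : ℤ)) ⊔ U), y - (N ^ i) h ∈ (M (β - (i : ℤ) - 1) ⊔ U))
    (hUN : ∀ x ∈ U, N x ∈ U)
    (hAN : ∀ x ∈ A, N x ∈ A)
    (hM'A : ∀ c : ℤ, M' c ⊓ A ≤ K c)
    (hMlo : ∀ c : ℤ, c ≤ lo → M c ≤ U)
    (hAK : A ≤ K khi)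
    (f : V →ₗ[F] V)
    (hfA : ∀ v, f v ∈ A)
    (hfU : ∀ u ∈ U, f u = 0)
    (hfM : ∀ c : ℤ, ∀ x ∈ M c, x - f x ∈ M' c) :
    ∀ c : ℤ, ∀ x ∈ M c, f x ∈ K c := by
  -- commutator error lemma
  have he : ∀ (c : ℤ), ∀ y ∈ M c, f (N y) - N (f y) ∈ K (c - 2) := by
    intro c y hy
    have h1 : (N y) - f (N y) ∈ M' (c - 2) := hfM _ _ (hMN c y hy)
    have h2 : N (y - f y) ∈ M' (c - 2) := hM'N c _ (hfM c y hy)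
    have h3 : f (N y) - N (f y) = N (y - f y) - (N y - f (N y)) := by
      rw [map_sub]; abel
    have h4 : f (N y) - N (f y) ∈ M' (c - 2) := by
      rw [h3]; exact Submodule.sub_mem _ h2 h1
    have h5 : f (N y) - N (f y) ∈ A :=
      Submodule.sub_mem _ (hfA _) (hAN _ (hfA _))
    exact hM'A (c - 2) (Submodule.mem_inf.mpr ⟨h4, h5⟩)
  -- corrections lemma
  have hcorr : ∀ (t : ℕ) (c : ℤ), ∀ x ∈ M c,
      (N ^ t) (f x) - f ((N ^ t) x) ∈ K (c - 2 * t) := by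
    intro t
    induction t with
    | zero =>
      intro c x hx
      simpa using Submodule.zero_mem (K (c - 2 * ((0 : ℕ) : ℤ)))
    | succ t ih =>
      intro c x hx
      have hyM : (N ^ t) x ∈ M (c - 2 * t) := zshift hMN t c x hx
      have e1 : (N ^ (t + 1)) (f x) = N ((N ^ t) (f x)) := by rw [pow_succ']; rfl
      have e2 : (N ^ (t + 1)) x = N ((N ^ t) x) := by rw [pow_succ']; rfl
      have idd : (N ^ (t + 1)) (f x) - f ((N ^ (t + 1)) x)
          = N ((N ^ t) (f x) - f ((N ^ t) x))
            + (N (f ((N ^ t) x)) - f (N ((N ^ t) x))) := by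
        rw [e1, e2, map_sub]; abel
      rw [idd]
      refine Submodule.add_mem _ ?_ ?_
      · have h2 := hKN _ _ (ih c x hx)
        rwa [show c - 2 * (t : ℤ) - 2 = c - 2 * ((t : ℕ) + 1 : ℕ) by push_cast; ring] at h2
      · have h2 := he (c - 2 * t) _ hyM
        have hneg : N (f ((N ^ t) x)) - f (N ((N ^ t) x)) ∈ K (c - 2 * (t : ℤ) - 2) := by
          have h3 := Submodule.neg_mem _ h2
          simpa using h3
        rwa [show c - 2 * (t : ℤ) - 2 = c - 2 * ((t : ℕ) + 1 : ℕ) by push_cast; ring] at hneg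
  -- the descending argument
  have HL : ∀ c : ℤ, (∀ d : ℤ, d < c → ∀ x ∈ M d, f x ∈ K d) →
      ∀ c' : ℤ, α ≤ c' → 2 * α - c' - 2 < c → ∀ x' ∈ M c', f x' ∈ K c' := by
    intro c SIH c' hc'α hreach x' hx'
    by_contra hcon
    have hbdd : ∀ z : ℤ, f x' ∈ K z → c' + 1 ≤ z := by
      intro z hz
      by_contra hzc; push_neg at hzc
      exact hcon (hKmono (by omega) hz)
    obtain ⟨ν, hν, hνmin⟩ :=
      Int.exists_least_of_bdd ⟨c' + 1, hbdd⟩ ⟨khi, hAK (hfA x')⟩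
    have hν1 : c' + 1 ≤ ν := hbdd ν hν
    set j : ℕ := (ν - α).toNat with hj
    have hjc : (j : ℤ) = ν - α := Int.toNat_of_nonneg (by omega)
    have hx2 : (N ^ j) x' ∈ M (c' - 2 * j) := zshift hMN j c' x' hx'
    have hlt : c' - 2 * (j : ℤ) < c := by omega
    have h5 : f ((N ^ j) x') ∈ K (c' - 2 * j) := SIH _ hlt _ hx2
    have h6 : (N ^ j) (f x') - f ((N ^ j) x') ∈ K (c' - 2 * j) := hcorr j c' x' hx'
    have h7 : (N ^ j) (f x') ∈ K (c' - 2 * j) := by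
      have h8 := Submodule.add_mem _ h6 h5; simpa using h8
    have h8 : (N ^ j) (f x') ∈ K (α - (j : ℤ) - 1) := hKmono (by omega) h7
    have h9 : f x' ∈ K (α + (j : ℤ) - 1) :=
      hK2 j (f x') (by rw [show α + (j : ℤ) = ν by omega]; exact hν) h8
    have h10 := hνmin _ h9
    omega
  -- main strong induction (bounded below)
  have Hmain : ∀ d : ℕ, ∀ c : ℤ, c ≤ lo + d → ∀ x ∈ M c, f x ∈ K c := by
    intro d
    induction d with
    | zero =>
      intro c hc x hx
      rw [hfU x (hMlo c (by omega) hx)]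
      exact Submodule.zero_mem _
    | succ d ih =>
      intro c hc x hx
      by_cases hcd : c ≤ lo + d
      · exact ih c hcd x hx
      · have SIH : ∀ d' : ℤ, d' < c → ∀ x ∈ M d', f x ∈ K d' := by
          intro d' hd' x hx
          exact ih d' (by omega) x hx
        by_cases hcα : α ≤ c
        · exact HL c SIH c hcα (by omega) x hx
        · push_neg at hcα
          set i : ℕ := (β - c).toNat with hi
          have hic : (i : ℤ) = β - c := Int.toNat_of_nonneg (by omega)
          have hxJ : x ∈ M (β - (i : ℤ)) ⊔ U := by
            rw [show β - (i : ℤ) = c by omega]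
            exact Submodule.mem_sup_left hx
          obtain ⟨h, hhmem, hhy⟩ := hS3 i x hxJ
          rcases Submodule.mem_sup.mp hhmem with ⟨hM_, hhM, u, hu, rfl⟩
          have hix : x - (N ^ i) hM_ ∈ M (β - (i : ℤ) - 1) ⊔ U := by
            have h2 : (N ^ i) u ∈ U := zstab hUN i u hu
            have h3 : x - (N ^ i) hM_ = (x - (N ^ i) (hM_ + u)) + (N ^ i) u := by
              rw [map_add]; abel
            rw [h3]
            exact Submodule.add_mem _ hhy (Submodule.mem_sup_right h2)
          rw [show β - (i : ℤ) - 1 = c - 1 by omega] at hix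
          rcases Submodule.mem_sup.mp hix with ⟨m₁, hm₁, u₁, hu₁, hsum⟩
          have hx_eq : x = (N ^ i) hM_ + (m₁ + u₁) := by rw [hsum]; abel
          have hfx : f x = f ((N ^ i) hM_) + f m₁ := by
            rw [hx_eq]
            rw [map_add, map_add, hfU u₁ hu₁, add_zero]
          have hHM : f hM_ ∈ K (β + (i : ℤ)) :=
            HL c SIH (β + (i : ℤ)) (by omega) (by omega) hM_ hhM
          have h10 : (N ^ i) (f hM_) ∈ K ((β + (i : ℤ)) - 2 * i) := zshift hKN i _ _ hHM
          have h11 : (N ^ i) (f hM_) - f ((N ^ i) hM_) ∈ K ((β + (i : ℤ)) - 2 * i) :=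
            hcorr i (β + (i : ℤ)) hM_ hhM
          have h12 : f ((N ^ i) hM_) ∈ K ((β + (i : ℤ)) - 2 * i) := by
            have h13 := Submodule.sub_mem _ h10 h11; simpa using h13
          rw [show (β + (i : ℤ)) - 2 * (i : ℤ) = c by omega] at h12
          have h13 : f m₁ ∈ K c := hKmono (by omega) (SIH (c - 1) (by omega) m₁ hm₁)
          rw [hfx]
          exact Submodule.add_mem _ h12 h13
  intro c x hx
  by_cases hc : c ≤ lo
  · exact Hmain 0 c (by push_cast; omega) x hx
  · exact Hmain (c - lo).toNat c (by omega) x hx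



/-- Auxiliary notion: `M` is a relative weight filtration "between `W a` and `W (a+n)`". -/
def AuxRWF (N : V →ₗ[F] V) (W : ℤ → Submodule F V) (M : ℤ → Submodule F V)
    (a : ℤ) (n : ℕ) : Prop :=
  (∀ k, M k ≤ M (k + 1)) ∧
  (∃ lo : ℤ, ∀ k : ℤ, k ≤ lo → M k = W a) ∧
  (∃ hi : ℤ, ∀ k : ℤ, hi ≤ k → M k = W (a + n)) ∧
  (∀ k, W a ≤ M k ∧ M k ≤ W (a + n)) ∧
  (∀ k : ℤ, ∀ x ∈ M k, N x ∈ M (k - 2)) ∧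
  (∀ m : ℤ, a < m → m ≤ a + n → IsGrWeightFiltration F N (W (m - 1)) (W m)
      (fun k => (M (k + m) ⊓ W m) ⊔ W (m - 1)))


end RWFU
-- appended to master for testing
section TestIncl
variable {F : Type*} [Field F] {V : Type*} [AddCommGroup V] [Module F V]
open RWFU

/-- One inclusion in the amplitude induction step (amplitude `n+1`, `n ≥ 1`). -/
lemma RWFU.incl_step (N : V →ₗ[F] V) (W : ℤ → Submodule F V)
    (hWmono : ∀ k, W k ≤ W (k + 1))
    (hNW : ∀ m : ℤ, ∀ x ∈ W m, N x ∈ W m)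
    (a : ℤ) (n : ℕ) (hn : 1 ≤ n)
    (M M' : ℤ → Submodule F V)
    (hM : AuxRWF N W M a (n + 1)) (hM' : AuxRWF N W M' a (n + 1))
    (G1 : ∀ c : ℤ, M c ⊓ W (a + (n : ℤ)) = M' c ⊓ W (a + (n : ℤ)))
    (G2 : ∀ c : ℤ, M c ⊔ W (a + 1) = M' c ⊔ W (a + 1)) :
    ∀ c : ℤ, M c ≤ M' c := by
  obtain ⟨hMmono, ⟨loM, hloM⟩, ⟨hiM, hhiM⟩, hsand, hMN, hMcl⟩ := hM
  obtain ⟨hM'mono, ⟨loM', hloM'⟩, ⟨hiM', hhiM'⟩, hsand', hM'N, hM'cl⟩ := hM'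
  have hWm : ∀ {c d : ℤ}, c ≤ d → W c ≤ W d := zmono hWmono
  have hβeq : (a + ((n + 1 : ℕ) : ℤ)) = a + (n : ℤ) + 1 := by push_cast; ring
  have hMtop : ∀ k, M k ≤ W (a + (n : ℤ) + 1) := fun k => by
    rw [← hβeq]; exact (hsand k).2
  have hM'top : ∀ k, M' k ≤ W (a + (n : ℤ) + 1) := fun k => by
    rw [← hβeq]; exact (hsand' k).2
  have hMbot : ∀ k, W a ≤ M k := fun k => (hsand k).1
  have hM'bot : ∀ k, W a ≤ M' k := fun k => (hsand' k).1
  set lo : ℤ := min loM loM' with hlo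
  set hi : ℤ := max (max hiM hiM') lo with hhi
  have hloM2 : ∀ k : ℤ, k ≤ lo → M k = W a := fun k hk => hloM k (by omega)
  have hloM'2 : ∀ k : ℤ, k ≤ lo → M' k = W a := fun k hk => hloM' k (by omega)
  have hhiM2 : ∀ k : ℤ, hi ≤ k → M k = W (a + (n : ℤ) + 1) := fun k hk => by
    rw [← hβeq]; exact hhiM k (by omega)
  have hhiM'2 : ∀ k : ℤ, hi ≤ k → M' k = W (a + (n : ℤ) + 1) := fun k hk => by
    rw [← hβeq]; exact hhiM' k (by omega)
  have hlohi : lo ≤ hi := le_max_right _ _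
  -- corrector
  obtain ⟨f, hfA, hfU, hf⟩ := exists_corrector (W (a + (n : ℤ))) (W (a + 1))
      (fun t => M (lo + t)) (fun t => M' (lo + t))
      (by
        simp only [Nat.cast_zero, add_zero]
        rw [hloM2 lo le_rfl]; exact hWm (by omega))
      (fun t => zmono hMmono (by push_cast; omega))
      (fun t => zmono hM'mono (by push_cast; omega))
      (fun t => (G1 _).le.trans inf_le_left)
      (fun t => le_sup_left.trans (G2 _).le)
      ((hi - lo).toNat)
  -- global corrector property
  have hfM : ∀ c : ℤ, ∀ x ∈ M c, x - f x ∈ M' c := by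
    intro c x hx
    by_cases hclo : c ≤ lo
    · have hxa : x ∈ W a := by rw [← hloM2 c hclo]; exact hx
      rw [hfU x (hWm (by omega) hxa), sub_zero]
      exact hM'bot c hxa
    · by_cases hchi : c ≤ hi
      · have h1 := hf (c - lo).toNat (by omega) x
          (by rw [show lo + (((c - lo).toNat : ℕ) : ℤ) = c by omega]; exact hx)
        rwa [show lo + (((c - lo).toNat : ℕ) : ℤ) = c by omega] at h1
      · have hxhi : x ∈ M hi := by
          rw [hhiM2 hi le_rfl, ← hhiM2 c (by omega)]; exact hx
        have h1 := hf (hi - lo).toNat le_rfl x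
          (by rw [show lo + (((hi - lo).toNat : ℕ) : ℤ) = hi by omega]; exact hxhi)
        rw [show lo + (((hi - lo).toNat : ℕ) : ℤ) = hi by omega] at h1
        exact zmono hM'mono (by omega) h1
  -- the target filtration on the bottom graded piece
  set K : ℤ → Submodule F V := fun c => (M c ⊓ W (a + 1)) ⊔ W a with hKdef
  have hKmono : ∀ {c d : ℤ}, c ≤ d → K c ≤ K d := by
    intro c d hcd
    exact sup_le_sup (inf_le_inf_right _ (zmono hMmono hcd)) le_rfl
  have hKN : ∀ k : ℤ, ∀ x ∈ K k, N x ∈ K (k - 2) := by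
    intro k x hx
    rcases Submodule.mem_sup.mp hx with ⟨y, hy, w, hw, rfl⟩
    rcases Submodule.mem_inf.mp hy with ⟨hy1, hy2⟩
    rw [map_add]
    exact Submodule.add_mem _
      (Submodule.mem_sup_left (Submodule.mem_inf.mpr ⟨hMN k y hy1, hNW (a + 1) y hy2⟩))
      (Submodule.mem_sup_right (hNW a w hw))
  -- bottom graded clause
  have hKcl := hMcl (a + 1) (by omega) (by push_cast; omega)
  rw [show a + 1 - 1 = a by ring] at hKcl
  have hK2 : ∀ j : ℕ, ∀ y ∈ K ((a + 1) + (j : ℤ)),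
      (N ^ j) y ∈ K ((a + 1) - (j : ℤ) - 1) → y ∈ K ((a + 1) + (j : ℤ) - 1) := by
    intro j y hy hNy
    have h := (hKcl.2.2.2.2 j).2.1 y ?_ ?_
    · have h2 : y ∈ (M ((j : ℤ) - 1 + (a + 1)) ⊓ W (a + 1)) ⊔ W a := h
      rwa [show (j : ℤ) - 1 + (a + 1) = (a + 1) + (j : ℤ) - 1 by ring] at h2
    · have h2 : y ∈ (M ((a + 1) + (j : ℤ)) ⊓ W (a + 1)) ⊔ W a := hy
      rwa [show (a + 1) + (j : ℤ) = (j : ℤ) + (a + 1) by ring] at h2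
    · have h2 : (N ^ j) y ∈ (M ((a + 1) - (j : ℤ) - 1) ⊓ W (a + 1)) ⊔ W a := hNy
      rwa [show (a + 1) - (j : ℤ) - 1 = -(j : ℤ) - 1 + (a + 1) by ring] at h2
  -- top graded clause
  have hTopM := hMcl (a + (n : ℤ) + 1) (by omega) (by push_cast; omega)
  have hfam : (fun k => (M (k + (a + (n : ℤ) + 1)) ⊓ W (a + (n : ℤ) + 1)) ⊔ W (a + (n : ℤ) + 1 - 1))
      = (fun k : ℤ => M (k + (a + (n : ℤ) + 1)) ⊔ W (a + (n : ℤ))) := by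
    funext k
    rw [inf_eq_left.mpr (hMtop (k + (a + (n : ℤ) + 1))),
      show a + (n : ℤ) + 1 - 1 = a + (n : ℤ) by ring]
  rw [hfam] at hTopM
  have hS3 : ∀ i : ℕ, ∀ y ∈ (M ((a + (n : ℤ) + 1) - (i : ℤ)) ⊔ W (a + (n : ℤ))),
      ∃ h ∈ (M ((a + (n : ℤ) + 1) + (i : ℤ)) ⊔ W (a + (n : ℤ))),
        y - (N ^ i) h ∈ (M ((a + (n : ℤ) + 1) - (i : ℤ) - 1) ⊔ W (a + (n : ℤ))) := by
    intro i y hy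
    have h2 := (hTopM.2.2.2.2 i).2.2 y ?_
    · obtain ⟨x, hx1, hx2⟩ := h2
      have hx1' : x ∈ M ((i : ℤ) + (a + (n : ℤ) + 1)) ⊔ W (a + (n : ℤ)) := hx1
      have hx2' : y - (N ^ i) x ∈ M (-(i : ℤ) - 1 + (a + (n : ℤ) + 1)) ⊔ W (a + (n : ℤ)) := hx2
      refine ⟨x, ?_, ?_⟩
      · rwa [show (i : ℤ) + (a + (n : ℤ) + 1) = (a + (n : ℤ) + 1) + (i : ℤ) by ring] at hx1'
      · rwa [show -(i : ℤ) - 1 + (a + (n : ℤ) + 1) = (a + (n : ℤ) + 1) - (i : ℤ) - 1 by ring]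
          at hx2'
    · show y ∈ M (-(i : ℤ) + (a + (n : ℤ) + 1)) ⊔ W (a + (n : ℤ))
      rw [show -(i : ℤ) + (a + (n : ℤ) + 1) = (a + (n : ℤ) + 1) - (i : ℤ) by ring]
      exact hy
  -- equality of the intersections with the bottom step
  have hinfeq : ∀ c : ℤ, M c ⊓ W (a + 1) = M' c ⊓ W (a + 1) := by
    intro c
    have e1 : M c ⊓ W (a + 1) = (M c ⊓ W (a + (n : ℤ))) ⊓ W (a + 1) := by
      rw [inf_assoc, inf_eq_right.mpr (hWm (by omega))]
    have e2 : M' c ⊓ W (a + 1) = (M' c ⊓ W (a + (n : ℤ))) ⊓ W (a + 1) := by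
      rw [inf_assoc, inf_eq_right.mpr (hWm (by omega))]
    rw [e1, e2, G1 c]
  -- apply the key inclusion lemma
  have hkey := key_incl N M M' K (W (a + (n : ℤ))) (W (a + 1))
      (a + 1) (a + (n : ℤ) + 1) lo hi (by omega)
      hMN hM'N hKmono hKN hK2 hS3 (hNW _) (hNW _)
      (fun c => (hinfeq c).ge.trans le_sup_left)
      (fun c hc => by rw [hloM2 c hc]; exact hWm (by omega))
      (by
        refine le_trans ?_ (le_sup_left : M hi ⊓ W (a + 1) ≤ K hi)
        refine le_inf ?_ le_rfl
        rw [hhiM2 hi le_rfl]; exact hWm (by omega))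
      f hfA hfU hfM
  intro c x hx
  have h1 := hfM c x hx
  have h2 := hkey c x hx
  have h3 : f x ∈ M' c := by
    rcases Submodule.mem_sup.mp h2 with ⟨y, hy, w, hw, hyw⟩
    rw [← hyw]
    refine Submodule.add_mem _ ?_ (hM'bot c hw)
    exact (inf_le_left : M' c ⊓ W (a + 1) ≤ M' c) ((hinfeq c).le hy)
  have h4 : x = (x - f x) + f x := by abel
  rw [h4]
  exact Submodule.add_mem _ h1 h3

end TestIncl
section Assembly
variable {F : Type*} [Field F] {V : Type*} [AddCommGroup V] [Module F V]
open RWFU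

lemma RWFU.aux_restrict (N : V →ₗ[F] V) (W : ℤ → Submodule F V)
    (hWmono : ∀ k, W k ≤ W (k + 1))
    (hNW : ∀ m : ℤ, ∀ x ∈ W m, N x ∈ W m)
    (a : ℤ) (n : ℕ) (M : ℤ → Submodule F V)
    (hM : AuxRWF N W M a (n + 1)) :
    AuxRWF N W (fun k => M k ⊓ W (a + (n : ℤ))) a n := by
  obtain ⟨hMmono, ⟨lo, hlo⟩, ⟨hi, hhi⟩, hsand, hMN, hMcl⟩ := hM
  have hWm : ∀ {c d : ℤ}, c ≤ d → W c ≤ W d := zmono hWmono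
  refine ⟨?_, ⟨lo, ?_⟩, ⟨hi, ?_⟩, ?_, ?_, ?_⟩
  · intro k; exact inf_le_inf_right _ (hMmono k)
  · intro k hk
    simp only
    rw [hlo k hk]
    exact inf_eq_left.mpr (hWm (by omega))
  · intro k hk
    simp only
    rw [hhi k hk]
    exact inf_eq_right.mpr (hWm (by push_cast; omega))
  · intro k
    exact ⟨le_inf (hsand k).1 (hWm (by omega)), inf_le_right⟩
  · intro k x hx
    rcases Submodule.mem_inf.mp hx with ⟨h1, h2⟩
    exact Submodule.mem_inf.mpr ⟨hMN k x h1, hNW _ x h2⟩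
  · intro m hm1 hm2
    have h := hMcl m hm1 (by push_cast at hm2 ⊢; omega)
    have hfam : (fun k => ((M (k + m) ⊓ W (a + (n : ℤ))) ⊓ W m) ⊔ W (m - 1))
        = (fun k : ℤ => (M (k + m) ⊓ W m) ⊔ W (m - 1)) := by
      funext k
      rw [inf_assoc, inf_eq_right.mpr (hWm hm2 : W m ≤ W (a + (n : ℤ)))]
    simpa only [hfam] using h

lemma RWFU.aux_quot (N : V →ₗ[F] V) (W : ℤ → Submodule F V)
    (hWmono : ∀ k, W k ≤ W (k + 1))
    (hNW : ∀ m : ℤ, ∀ x ∈ W m, N x ∈ W m)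
    (a : ℤ) (n : ℕ) (M : ℤ → Submodule F V)
    (hM : AuxRWF N W M a (n + 1)) :
    AuxRWF N W (fun k => M k ⊔ W (a + 1)) (a + 1) n := by
  obtain ⟨hMmono, ⟨lo, hlo⟩, ⟨hi, hhi⟩, hsand, hMN, hMcl⟩ := hM
  have hWm : ∀ {c d : ℤ}, c ≤ d → W c ≤ W d := zmono hWmono
  refine ⟨?_, ⟨lo, ?_⟩, ⟨hi, ?_⟩, ?_, ?_, ?_⟩
  · intro k; exact sup_le_sup_right (hMmono k) _
  · intro k hk
    simp only
    rw [hlo k hk]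
    exact sup_eq_right.mpr (hWm (by omega))
  · intro k hk
    simp only
    rw [hhi k hk, sup_eq_left.mpr (hWm (by push_cast; omega))]
    congr 1; push_cast; ring
  · intro k
    constructor
    · exact le_sup_right
    · refine sup_le ((hsand k).2.trans (le_of_eq ?_)) (hWm (by push_cast; omega))
      congr 1; push_cast; ring
  · intro k x hx
    rcases Submodule.mem_sup.mp hx with ⟨y, hy, w, hw, hyw⟩
    rw [← hyw, map_add]
    exact Submodule.add_mem _ (Submodule.mem_sup_left (hMN k y hy))
      (Submodule.mem_sup_right (hNW _ w hw))
  · intro m hm1 hm2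
    have hm2' : m ≤ a + ((n + 1 : ℕ) : ℤ) := by push_cast at hm2 ⊢; omega
    have h := hMcl m (by omega) hm2'
    have hfam : (fun k => ((M (k + m) ⊔ W (a + 1)) ⊓ W m) ⊔ W (m - 1))
        = (fun k : ℤ => (M (k + m) ⊓ W m) ⊔ W (m - 1)) := by
      funext k
      have hA1 : W (a + 1) ≤ W (m - 1) := hWm (by omega)
      have hAm : W (a + 1) ≤ W m := hA1.trans (hWm (by omega))
      rw [sup_comm (M (k + m)) (W (a + 1)), sup_inf_assoc_of_le _ hAm,
        sup_comm (W (a + 1)) (M (k + m) ⊓ W m), sup_assoc, sup_eq_right.mpr hA1]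
    simpa only [hfam] using h

theorem RWFU.aux_unique (N : V →ₗ[F] V) (W : ℤ → Submodule F V)
    (hWmono : ∀ k, W k ≤ W (k + 1))
    (hNW : ∀ m : ℤ, ∀ x ∈ W m, N x ∈ W m) :
    ∀ n : ℕ, ∀ a : ℤ, ∀ M M' : ℤ → Submodule F V,
      AuxRWF N W M a n → AuxRWF N W M' a n → ∀ k, M k = M' k := by
  intro n
  induction n with
  | zero =>
    intro a M M' hM hM' k
    obtain ⟨-, -, -, hs, -, -⟩ := hM
    obtain ⟨-, -, -, hs', -, -⟩ := hM'
    have h0 : (a + ((0 : ℕ) : ℤ)) = a := by simp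
    have h1 : M k = W a := le_antisymm (by rw [← h0]; exact (hs k).2) (hs k).1
    have h2 : M' k = W a := le_antisymm (by rw [← h0]; exact (hs' k).2) (hs' k).1
    rw [h1, h2]
  | succ n ihn =>
    intro a M M' hM hM'
    rcases Nat.eq_zero_or_pos n with rfl | hn
    · -- amplitude 1 : direct zipper
      obtain ⟨hMmono, hMlo, hMhi, hsand, hMN, hMcl⟩ := hM
      obtain ⟨hM'mono, hM'lo, hM'hi, hsand', hM'N, hM'cl⟩ := hM'
      have hMcl1 := hMcl (a + 1) (by omega) (by push_cast; omega)
      have hM'cl1 := hM'cl (a + 1) (by omega) (by push_cast; omega)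
      have htop : ∀ k : ℤ, M k ≤ W (a + 1) := by
        intro k
        have := (hsand k).2
        rwa [show a + ((0 + 1 : ℕ) : ℤ) = a + 1 by push_cast; ring] at this
      have htop' : ∀ k : ℤ, M' k ≤ W (a + 1) := by
        intro k
        have := (hsand' k).2
        rwa [show a + ((0 + 1 : ℕ) : ℤ) = a + 1 by push_cast; ring] at this
      have hfam : (fun k => (M (k + (a + 1)) ⊓ W (a + 1)) ⊔ W (a + 1 - 1))
          = (fun k : ℤ => M (k + (a + 1))) := by
        funext k
        rw [inf_eq_left.mpr (htop (k + (a + 1))), show a + 1 - 1 = a by ring,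
          sup_eq_left.mpr (hsand (k + (a + 1))).1]
      have hfam' : (fun k => (M' (k + (a + 1)) ⊓ W (a + 1)) ⊔ W (a + 1 - 1))
          = (fun k : ℤ => M' (k + (a + 1))) := by
        funext k
        rw [inf_eq_left.mpr (htop' (k + (a + 1))), show a + 1 - 1 = a by ring,
          sup_eq_left.mpr (hsand' (k + (a + 1))).1]
      rw [hfam] at hMcl1
      rw [hfam'] at hM'cl1
      have hgr := gr_unique hMcl1 hM'cl1
      intro k
      have := hgr (k - (a + 1))
      simpa [sub_add_cancel] using this
    · -- amplitude ≥ 2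
      have hR := ihn a _ _ (aux_restrict N W hWmono hNW a n M hM)
        (aux_restrict N W hWmono hNW a n M' hM')
      have hQ := ihn (a + 1) _ _ (aux_quot N W hWmono hNW a n M hM)
        (aux_quot N W hWmono hNW a n M' hM')
      have hR' : ∀ c : ℤ, M c ⊓ W (a + (n : ℤ)) = M' c ⊓ W (a + (n : ℤ)) := fun c => hR c
      have hQ' : ∀ c : ℤ, M c ⊔ W (a + 1) = M' c ⊔ W (a + 1) := fun c => hQ c
      have hI1 := incl_step N W hWmono hNW a n hn M M' hM hM' hR' hQ'
      have hI2 := incl_step N W hWmono hNW a n hn M' M hM' hM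
        (fun c => (hR' c).symm) (fun c => (hQ' c).symm)
      intro k
      exact le_antisymm (hI1 k) (hI2 k)

end Assembly

/-- Uniqueness of the relative weight filtration: if `N` is a nilpotent endomorphism
of the filtered vector space `(V, W)` preserving the filtration, then any two
relative weight filtrations for `N` relative to `W` coincide. -/
theorem relativeWeightFiltration_unique (F : Type*) [Field F] [CharZero F]
    (V : Type*) [AddCommGroup V] [Module F V] [FiniteDimensional F V]
    (W : ℤ → Submodule F V) (hW : IsVSFiltration F W)
    (N : V →ₗ[F] V) (hN : IsNilpotent N)
    (hNW : ∀ m : ℤ, ∀ x : V, x ∈ W m → N x ∈ W m)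
    (M M' : ℤ → Submodule F V)
    (hM : IsRelativeWeightFiltration F N W M)
    (hM' : IsRelativeWeightFiltration F N W M') :
    ∀ k : ℤ, M k = M' k := by
  obtain ⟨hWmono, ⟨a₀, ha₀⟩, ⟨b₀, hb₀⟩⟩ := hW
  obtain ⟨⟨hMmono, ⟨aM, haM⟩, ⟨bM, hbM⟩⟩, hMN, hMcl⟩ := hM
  obtain ⟨⟨hM'mono, ⟨aM', haM'⟩, ⟨bM', hbM'⟩⟩, hM'N, hM'cl⟩ := hM'
  set n : ℕ := (b₀ - a₀).toNat with hn
  have hWa : W a₀ = ⊥ := ha₀ a₀ le_rfl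
  have hWtop : W (a₀ + (n : ℤ)) = ⊤ := hb₀ _ (by omega)
  have hA : RWFU.AuxRWF N W M a₀ n := by
    refine ⟨hMmono, ⟨aM, ?_⟩, ⟨bM, ?_⟩, ?_, hMN, ?_⟩
    · intro k hk; rw [haM k hk, hWa]
    · intro k hk; rw [hbM k hk, hWtop]
    · intro k; rw [hWa, hWtop]; exact ⟨bot_le, le_top⟩
    · intro m _ _; exact hMcl m
  have hA' : RWFU.AuxRWF N W M' a₀ n := by
    refine ⟨hM'mono, ⟨aM', ?_⟩, ⟨bM', ?_⟩, ?_, hM'N, ?_⟩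
    · intro k hk; rw [haM' k hk, hWa]
    · intro k hk; rw [hbM' k hk, hWtop]
    · intro k; rw [hWa, hWtop]; exact ⟨bot_le, le_top⟩
    · intro m _ _; exact hM'cl m
  exact RWFU.aux_unique N W hWmono hNW n a₀ M M' hA hA'
end

section
/- Let F be a field of characteristic zero and let f : V_1 → V_2 be a linear map between finite-dimensional F-vector spaces, each equipped with a filtration (W_m)_{m ∈ ℤ}, such that f(W_m V_1) ⊆ W_m V_2 for all m. Equip ker f with the restricted filtration W_m(ker f) = ker f ∩ W_m V_1, and coker f = V_2/f(V_1) with the quotient filtration (the image of W_m V_2). Then f is strict with respect to W_• — that is, W_m V_2 ∩ f(V_1) = f(W_m V_1) for all m ∈ ℤ — if and only if for every m ∈ ℤ the induced sequence on graded quotients 0 → Gr^W_m(ker f) → Gr^W_m V_1 → Gr^W_m V_2 → Gr^W_m(coker f) → 0 is exact, where Gr^W_m denotes the quotient of the m-th filtration step by the (m−1)-st. -/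
/-- A filtration-preserving linear map `f : (V₁, W₁) → (V₂, W₂)` of finite-dimensional
filtered vector spaces is strict (`W₂ m ⊓ range f = f (W₁ m)` for all `m`) if and only
if, for every `m`, the induced sequence on graded quotients
`0 → Gr_m (ker f) → Gr_m V₁ → Gr_m V₂ → Gr_m (coker f) → 0`
is exact.  Each exactness condition is expressed at the level of representatives:
* injectivity of `Gr_m (ker f) → Gr_m V₁`,
* exactness at `Gr_m V₁`: the kernel of the induced map `Gr_m V₁ → Gr_m V₂`
  (represented by `W₁ m ⊓ f⁻¹ (W₂ (m-1))`) equals the image of `Gr_m (ker f)`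
  (represented by `(ker f ⊓ W₁ m) ⊔ W₁ (m-1)`),
* exactness at `Gr_m V₂`: the kernel of `Gr_m V₂ → Gr_m (coker f)`
  (represented by `W₂ m ⊓ (range f ⊔ W₂ (m-1))`) equals the image of `Gr_m V₁`
  (represented by `f (W₁ m) ⊔ W₂ (m-1)`),
* surjectivity of `Gr_m V₂ → Gr_m (coker f)`: every element of the `m`-th step
  `W₂ m ⊔ range f` of the coimage filtration is, modulo the `(m-1)`-st step
  `W₂ (m-1) ⊔ range f`, represented by an element of `W₂ m`. -/
theorem strict_iff_graded_exact (F : Type*) [Field F] [CharZero F]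
    (V₁ V₂ : Type*) [AddCommGroup V₁] [Module F V₁] [FiniteDimensional F V₁]
    [AddCommGroup V₂] [Module F V₂] [FiniteDimensional F V₂]
    (W₁ : ℤ → Submodule F V₁) (W₂ : ℤ → Submodule F V₂)
    (hW₁mono : ∀ m : ℤ, W₁ m ≤ W₁ (m + 1))
    (hW₁bot : ∃ a : ℤ, ∀ m : ℤ, m ≤ a → W₁ m = ⊥)
    (hW₁top : ∃ b : ℤ, ∀ m : ℤ, b ≤ m → W₁ m = ⊤)
    (hW₂mono : ∀ m : ℤ, W₂ m ≤ W₂ (m + 1))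
    (hW₂bot : ∃ a : ℤ, ∀ m : ℤ, m ≤ a → W₂ m = ⊥)
    (hW₂top : ∃ b : ℤ, ∀ m : ℤ, b ≤ m → W₂ m = ⊤)
    (f : V₁ →ₗ[F] V₂) (hf : ∀ m : ℤ, ∀ x : V₁, x ∈ W₁ m → f x ∈ W₂ m) :
    (∀ m : ℤ, W₂ m ⊓ LinearMap.range f = Submodule.map f (W₁ m)) ↔
    (∀ m : ℤ,
      (LinearMap.ker f ⊓ W₁ m ⊓ W₁ (m - 1) ≤ LinearMap.ker f ⊓ W₁ (m - 1)) ∧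
      (W₁ m ⊓ Submodule.comap f (W₂ (m - 1)) =
        (LinearMap.ker f ⊓ W₁ m) ⊔ W₁ (m - 1)) ∧
      (W₂ m ⊓ (LinearMap.range f ⊔ W₂ (m - 1)) =
        Submodule.map f (W₁ m) ⊔ W₂ (m - 1)) ∧
      (∀ z : V₂, z ∈ W₂ m ⊔ LinearMap.range f →
        ∃ y ∈ W₂ m, z - y ∈ W₂ (m - 1) ⊔ LinearMap.range f)) := by
  have hW₁mono' : ∀ {m n : ℤ}, m ≤ n → W₁ m ≤ W₁ n := fun {m n} h =>
    Int.le_induction (motive := fun n _ => W₁ m ≤ W₁ n) (le_refl (W₁ m)) (fun k _ ih => ih.trans (hW₁mono k)) n h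
  have hW₂mono' : ∀ {m n : ℤ}, m ≤ n → W₂ m ≤ W₂ n := fun {m n} h =>
    Int.le_induction (motive := fun n _ => W₂ m ≤ W₂ n) (le_refl (W₂ m)) (fun k _ ih => ih.trans (hW₂mono k)) n h
  constructor
  · intro hstrict m
    refine ⟨?_, ?_, ?_, ?_⟩
    · intro x hx
      exact ⟨hx.1.1, hx.2⟩
    · apply le_antisymm
      · rintro x ⟨hx1, hx2⟩
        have hfx : f x ∈ W₂ (m - 1) ⊓ LinearMap.range f :=
          ⟨hx2, ⟨x, rfl⟩⟩
        rw [hstrict (m - 1)] at hfx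
        obtain ⟨y, hy, hfy⟩ := hfx
        refine Submodule.mem_sup.mpr ⟨x - y, ⟨?_, ?_⟩, y, hy, by abel⟩
        · simp only [SetLike.mem_coe, LinearMap.mem_ker, map_sub, hfy, sub_self]
        · exact sub_mem hx1 (hW₁mono' (by linarith) hy)
      · apply sup_le
        · rintro x ⟨hk, hm⟩
          refine ⟨hm, ?_⟩
          simp [Submodule.mem_comap, LinearMap.mem_ker.mp hk]
        · intro x hx
          exact ⟨hW₁mono' (by linarith) hx, hf (m - 1) x hx⟩
    · apply le_antisymm
      · rintro z ⟨hz1, hz2⟩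
        obtain ⟨u, ⟨v, rfl⟩, w, hw, rfl⟩ := Submodule.mem_sup.mp hz2
        have hfv : f v ∈ W₂ m ⊓ LinearMap.range f := by
          refine ⟨?_, ⟨v, rfl⟩⟩
          have : f v = (f v + w) - w := by abel
          rw [this]
          exact sub_mem hz1 (hW₂mono' (by linarith) hw)
        rw [hstrict m] at hfv
        exact Submodule.mem_sup.mpr ⟨f v, hfv, w, hw, rfl⟩
      · apply sup_le
        · rintro z ⟨x, hx, rfl⟩
          exact ⟨hf m x hx, le_sup_left (a := LinearMap.range f) ⟨x, rfl⟩⟩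
        · intro z hz
          exact ⟨hW₂mono' (by linarith) hz, le_sup_right (b := W₂ (m - 1)) hz⟩
    · intro z hz
      obtain ⟨w, hw, r, hr, rfl⟩ := Submodule.mem_sup.mp hz
      refine ⟨w, hw, ?_⟩
      have : w + r - w = r := by abel
      rw [this]
      exact le_sup_right (b := LinearMap.range f) hr
  · intro hg m
    apply le_antisymm
    · -- the hard direction: W₂ m ⊓ range f ≤ map f (W₁ m), by induction from below
      obtain ⟨a, ha⟩ := hW₂bot
      have key : ∀ n : ℤ, a ≤ n → W₂ n ⊓ LinearMap.range f ≤ Submodule.map f (W₁ n) := by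
        refine Int.le_induction (motive := fun n _ => W₂ n ⊓ LinearMap.range f ≤ Submodule.map f (W₁ n)) ?_ ?_
        · show W₂ a ⊓ LinearMap.range f ≤ Submodule.map f (W₁ a)
          rw [ha a le_rfl]
          simp
        · intro n hn ih
          rintro z ⟨hz1, hz2⟩
          have h3 := (hg (n + 1)).2.2.1
          rw [show (n + 1 : ℤ) - 1 = n by ring] at h3
          have hz3 : z ∈ Submodule.map f (W₁ (n + 1)) ⊔ W₂ n := by
            rw [← h3]
            exact ⟨hz1, le_sup_left (b := W₂ n) hz2⟩
          obtain ⟨u, ⟨x, hx, rfl⟩, w, hw, rfl⟩ := Submodule.mem_sup.mp hz3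
          have hw2 : w ∈ W₂ n ⊓ LinearMap.range f := by
            refine ⟨hw, ?_⟩
            obtain ⟨v, hv⟩ := hz2
            exact ⟨v - x, by rw [map_sub, hv]; abel⟩
          obtain ⟨x', hx', hfx'⟩ := ih hw2
          exact ⟨x + x', add_mem hx (hW₁mono' (by linarith) hx'), by rw [map_add, hfx']⟩
      rcases le_total m a with hm | hm
      · rw [ha m hm]
        simp
      · exact key m hm
    · rintro z ⟨x, hx, rfl⟩
      exact ⟨hf m x hx, ⟨x, rfl⟩⟩
end
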